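/- arXiv:2404.16211 — 3 statements merged into one kernel-verified Lean document; each statement's English description precedes it below -/
import Mathlib

section
/- Let N ≥ 1 and let σ_N be the uniform probability measure on the unit sphere S^{N−1} ⊂ ℝ^N. Let O be an N×N real symmetric positive semidefinite matrix, and for t ≥ 1 let μ_t(O) = ∫_{S^{N−1}} (ψᵀ O ψ)^t dσ_N(ψ). Then μ_t(O) ≥ (Tr(O)/N)^t · ∏_{j=0}^{t−1} N/(N + 2j). (Since ∏_{j=0}^{t−1} N/(N+2j) = 1 − O(t²/N), this is an exact, nonasymptotic form of the lower bound μ_t(O) ≥ (Tr(O)/N)^t (1 − O(t/N)) of Corollary 4.) -/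
open MeasureTheory Matrix Finset

noncomputable section

/-- The map induced on the unit sphere by a linear isometry equivalence of `ℝ^N`. -/
def sphereMap {N : ℕ} (f : EuclideanSpace ℝ (Fin N) ≃ₗᵢ[ℝ] EuclideanSpace ℝ (Fin N)) :
    Metric.sphere (0 : EuclideanSpace ℝ (Fin N)) 1 →
      Metric.sphere (0 : EuclideanSpace ℝ (Fin N)) 1 :=
  fun ψ => ⟨f ψ, by
    rw [mem_sphere_zero_iff_norm, f.norm_map]
    exact mem_sphere_zero_iff_norm.mp ψ.2⟩

/-- `σ` is the uniform (rotation-invariant) probability measure on the unit sphere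
`S^{N-1} ⊂ ℝ^N`. -/
def IsUniformSphereMeasure {N : ℕ}
    (σ : Measure (Metric.sphere (0 : EuclideanSpace ℝ (Fin N)) 1)) : Prop :=
  IsProbabilityMeasure σ ∧
    ∀ f : EuclideanSpace ℝ (Fin N) ≃ₗᵢ[ℝ] EuclideanSpace ℝ (Fin N),
      Measure.map (sphereMap f) σ = σ

namespace HaarMomentAux

variable {N : ℕ}

abbrev Sph (N : ℕ) := Metric.sphere (0 : EuclideanSpace ℝ (Fin N)) 1

lemma cont_coord (i : Fin N) : Continuous fun ψ : Sph N => (ψ : EuclideanSpace ℝ (Fin N)) i :=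
  (EuclideanSpace.proj i).continuous.comp continuous_subtype_val

lemma integrable_of_continuous (σ : Measure (Sph N)) [IsProbabilityMeasure σ]
    {f : Sph N → ℝ} (hf : Continuous f) : Integrable f σ := by
  rw [← integrableOn_univ]
  exact hf.continuousOn.integrableOn_compact isCompact_univ

lemma cont_sphereMap (f : EuclideanSpace ℝ (Fin N) ≃ₗᵢ[ℝ] EuclideanSpace ℝ (Fin N)) :
    Continuous (sphereMap f) :=
  Continuous.subtype_mk (f.continuous.comp continuous_subtype_val) _

lemma integral_invar {σ : Measure (Sph N)} (hσ : IsUniformSphereMeasure σ)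
    (f : EuclideanSpace ℝ (Fin N) ≃ₗᵢ[ℝ] EuclideanSpace ℝ (Fin N))
    {g : Sph N → ℝ} (hg : Continuous g) :
    ∫ ψ, g (sphereMap f ψ) ∂σ = ∫ ψ, g ψ ∂σ := by
  conv_rhs => rw [← hσ.2 f]
  rw [integral_map (cont_sphereMap f).aemeasurable hg.aestronglyMeasurable]

lemma integral_offdiag {σ : Measure (Sph N)} (hσ : IsUniformSphereMeasure σ)
    {i j : Fin N} (hij : i ≠ j) :
    ∫ ψ : Sph N, (ψ : EuclideanSpace ℝ (Fin N)) i * (ψ : EuclideanSpace ℝ (Fin N)) j ∂σ = 0 := by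
  have := hσ.1
  set f := LinearIsometryEquiv.piLpCongrRight 2
    (fun k => if k = i then LinearIsometryEquiv.neg ℝ else LinearIsometryEquiv.refl ℝ ℝ)
  have hfapp : ∀ (x : EuclideanSpace ℝ (Fin N)) (k : Fin N),
      f x k = if k = i then -x k else x k := by
    intro x k
    rw [LinearIsometryEquiv.piLpCongrRight_apply]
    by_cases h : k = i
    · subst h; simp
    · simp [h]
  have hg : Continuous fun ψ : Sph N =>
      (ψ : EuclideanSpace ℝ (Fin N)) i * (ψ : EuclideanSpace ℝ (Fin N)) j :=
    (cont_coord i).mul (cont_coord j)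
  have key := integral_invar hσ f hg
  have hcomp : ∀ ψ : Sph N,
      ((sphereMap f ψ : EuclideanSpace ℝ (Fin N)) i * (sphereMap f ψ : EuclideanSpace ℝ (Fin N)) j)
        = -((ψ : EuclideanSpace ℝ (Fin N)) i * (ψ : EuclideanSpace ℝ (Fin N)) j) := by
    intro ψ
    have h1 : (sphereMap f ψ : EuclideanSpace ℝ (Fin N)) i = -(ψ : EuclideanSpace ℝ (Fin N)) i := by
      simp [sphereMap, hfapp]
    have h2 : (sphereMap f ψ : EuclideanSpace ℝ (Fin N)) j = (ψ : EuclideanSpace ℝ (Fin N)) j := by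
      simp [sphereMap, hfapp, hij.symm]
    rw [h1, h2]; ring
  rw [show (fun ψ : Sph N => (sphereMap f ψ : EuclideanSpace ℝ (Fin N)) i *
      (sphereMap f ψ : EuclideanSpace ℝ (Fin N)) j) = fun ψ : Sph N =>
      -((ψ : EuclideanSpace ℝ (Fin N)) i * (ψ : EuclideanSpace ℝ (Fin N)) j)
    from funext hcomp, integral_neg] at key
  linarith

lemma integral_diag_eq {σ : Measure (Sph N)} (hσ : IsUniformSphereMeasure σ) (i k : Fin N) :
    ∫ ψ : Sph N, ((ψ : EuclideanSpace ℝ (Fin N)) i) ^ 2 ∂σ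
      = ∫ ψ : Sph N, ((ψ : EuclideanSpace ℝ (Fin N)) k) ^ 2 ∂σ := by
  have := hσ.1
  set f := LinearIsometryEquiv.piLpCongrLeft 2 ℝ ℝ (Equiv.swap i k)
  have hg : Continuous fun ψ : Sph N => ((ψ : EuclideanSpace ℝ (Fin N)) k) ^ 2 :=
    (cont_coord k).pow 2
  have key := integral_invar hσ f hg
  have hcomp : ∀ ψ : Sph N,
      ((sphereMap f ψ : EuclideanSpace ℝ (Fin N)) k) ^ 2
        = ((ψ : EuclideanSpace ℝ (Fin N)) i) ^ 2 := by
    intro ψ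
    have : (sphereMap f ψ : EuclideanSpace ℝ (Fin N)) k
        = (ψ : EuclideanSpace ℝ (Fin N)) ((Equiv.swap i k).symm k) := by
      simp [sphereMap, f, LinearIsometryEquiv.piLpCongrLeft_apply, Equiv.piCongrLeft'_apply]
    rw [this]
    congr 1
    simp only [Equiv.symm_swap]
    exact congrArg _ (Equiv.swap_apply_right i k)
  rw [show (fun ψ : Sph N => ((sphereMap f ψ : EuclideanSpace ℝ (Fin N)) k) ^ 2)
      = fun ψ : Sph N => ((ψ : EuclideanSpace ℝ (Fin N)) i) ^ 2 from funext hcomp] at key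
  exact key

lemma sum_sq_coords (ψ : Sph N) :
    ∑ i : Fin N, ((ψ : EuclideanSpace ℝ (Fin N)) i) ^ 2 = 1 := by
  have hn : ‖(ψ : EuclideanSpace ℝ (Fin N))‖ = 1 := mem_sphere_zero_iff_norm.mp ψ.2
  rw [EuclideanSpace.norm_eq] at hn
  have h0 : 0 ≤ ∑ i : Fin N, ((ψ : EuclideanSpace ℝ (Fin N)) i) ^ 2 :=
    Finset.sum_nonneg fun i _ => sq_nonneg _
  have := congrArg (· ^ 2) hn
  simpa [Real.sq_sqrt, h0] using this

lemma integral_diag {σ : Measure (Sph N)} (hσ : IsUniformSphereMeasure σ) (hN : 1 ≤ N)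
    (i : Fin N) :
    ∫ ψ : Sph N, ((ψ : EuclideanSpace ℝ (Fin N)) i) ^ 2 ∂σ = 1 / N := by
  have := hσ.1
  have hsum : ∑ k : Fin N, ∫ ψ : Sph N, ((ψ : EuclideanSpace ℝ (Fin N)) k) ^ 2 ∂σ = 1 := by
    rw [← integral_finset_sum _ (fun k _ => integrable_of_continuous σ
      (f := fun ψ : Sph N => ((ψ : EuclideanSpace ℝ (Fin N)) k) ^ 2) ((cont_coord k).pow 2))]
    simp only [sum_sq_coords]
    simp
  have hall : ∀ k : Fin N, ∫ ψ : Sph N, ((ψ : EuclideanSpace ℝ (Fin N)) k) ^ 2 ∂σ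
      = ∫ ψ : Sph N, ((ψ : EuclideanSpace ℝ (Fin N)) i) ^ 2 ∂σ :=
    fun k => integral_diag_eq hσ k i
  rw [Finset.sum_congr rfl (fun k _ => hall k), Finset.sum_const, card_univ,
    Fintype.card_fin, nsmul_eq_mul] at hsum
  have hNpos : (0:ℝ) < N := by exact_mod_cast hN
  field_simp at hsum ⊢
  linarith

end HaarMomentAux

open HaarMomentAux

/-- nonasymptotic lower bound on the `t`-th Haar moment of a positive semidefinite
observable: `μ_t(O) ≥ (Tr(O)/N)^t · ∏_{j=0}^{t-1} N/(N+2j)`. -/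
theorem haar_moment_lower_bound (N : ℕ) (hN : 1 ≤ N)
    (σ : Measure (Metric.sphere (0 : EuclideanSpace ℝ (Fin N)) 1))
    (hσ : IsUniformSphereMeasure σ)
    (O : Matrix (Fin N) (Fin N) ℝ) (hpsd : O.PosSemidef)
    (t : ℕ) (ht : 1 ≤ t) :
    (O.trace / N) ^ t * ∏ j ∈ Finset.range t, (N : ℝ) / ((N : ℝ) + 2 * j) ≤
      ∫ ψ, ((ψ : EuclideanSpace ℝ (Fin N)) ⬝ᵥ
        O.mulVec (ψ : EuclideanSpace ℝ (Fin N))) ^ t ∂σ := by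
  have hprob := hσ.1
  set Q : Sph N → ℝ := fun ψ =>
    (ψ : EuclideanSpace ℝ (Fin N)) ⬝ᵥ O.mulVec (ψ : EuclideanSpace ℝ (Fin N)) with hQ
  -- continuity of Q
  have hQc : Continuous Q := by
    simp only [hQ, dotProduct, mulVec]
    exact continuous_finset_sum _ fun i _ => (cont_coord i).mul
      (continuous_finset_sum _ fun j _ => continuous_const.mul (cont_coord j))
  -- nonnegativity of Q
  have hQ0 : ∀ ψ : Sph N, 0 ≤ Q ψ := by
    intro ψ
    have := hpsd.dotProduct_mulVec_nonneg (ψ : EuclideanSpace ℝ (Fin N))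
    simpa using this
  -- mean of Q
  have hmean : ∫ ψ, Q ψ ∂σ = O.trace / N := by
    have hexp : ∀ ψ : Sph N, Q ψ = ∑ i : Fin N, ∑ j : Fin N,
        O i j * ((ψ : EuclideanSpace ℝ (Fin N)) i * (ψ : EuclideanSpace ℝ (Fin N)) j) := by
      intro ψ
      simp only [hQ, dotProduct, mulVec, Finset.mul_sum]
      exact Finset.sum_congr rfl fun i _ => Finset.sum_congr rfl fun j _ => by ring
    calc ∫ ψ, Q ψ ∂σ
        = ∑ i : Fin N, ∑ j : Fin N, O i j *
            ∫ ψ : Sph N, (ψ : EuclideanSpace ℝ (Fin N)) i * (ψ : EuclideanSpace ℝ (Fin N)) j ∂σ := by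
          simp only [funext hexp]
          rw [integral_finset_sum _ (fun i _ => integrable_of_continuous σ
            (f := fun ψ : Sph N => ∑ j : Fin N,
              O i j * ((ψ : EuclideanSpace ℝ (Fin N)) i * (ψ : EuclideanSpace ℝ (Fin N)) j))
            (continuous_finset_sum _ fun j _ =>
              continuous_const.mul ((cont_coord i).mul (cont_coord j))))]
          refine Finset.sum_congr rfl fun i _ => ?_
          rw [integral_finset_sum _ (fun j _ => integrable_of_continuous σ
            (f := fun ψ : Sph N =>
              O i j * ((ψ : EuclideanSpace ℝ (Fin N)) i * (ψ : EuclideanSpace ℝ (Fin N)) j))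
            (continuous_const.mul ((cont_coord i).mul (cont_coord j))))]
          exact Finset.sum_congr rfl fun j _ => integral_const_mul _ _
      _ = ∑ i : Fin N, O i i * (1 / N) := by
          refine Finset.sum_congr rfl fun i _ => ?_
          rw [Finset.sum_eq_single i]
          · rw [show (fun ψ : Sph N => (ψ : EuclideanSpace ℝ (Fin N)) i *
                (ψ : EuclideanSpace ℝ (Fin N)) i)
              = fun ψ : Sph N => ((ψ : EuclideanSpace ℝ (Fin N)) i) ^ 2 from
              funext fun ψ => (sq _).symm, integral_diag hσ hN i]
          · intro j _ hji
            rw [integral_offdiag hσ (Ne.symm hji), mul_zero]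
          · intro h; exact absurd (Finset.mem_univ i) h
      _ = O.trace / N := by
          rw [Matrix.trace]
          simp [Matrix.diag, Finset.sum_div, div_eq_mul_inv, one_div, Finset.sum_mul]
  -- Jensen
  have hjensen : (∫ ψ, Q ψ ∂σ) ^ t ≤ ∫ ψ, (Q ψ) ^ t ∂σ := by
    have hconv : ConvexOn ℝ (Set.Ici (0:ℝ)) (fun x : ℝ => x ^ t) := convexOn_pow t
    have := hconv.map_integral_le (continuous_pow t).continuousOn isClosed_Ici
      (Filter.Eventually.of_forall fun ψ => hQ0 ψ)
      (integrable_of_continuous σ hQc)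
      (integrable_of_continuous σ (hQc.pow t))
    simpa using this
  have htr0 : 0 ≤ O.trace / N := by
    rw [← hmean]
    exact integral_nonneg hQ0
  have hprod1 : ∏ j ∈ Finset.range t, (N : ℝ) / ((N : ℝ) + 2 * j) ≤ 1 := by
    apply Finset.prod_le_one
    · intro j _
      positivity
    · intro j _
      apply div_le_one_of_le₀
      · have : (0:ℝ) ≤ 2 * j := by positivity
        linarith
      · positivity
  calc (O.trace / N) ^ t * ∏ j ∈ Finset.range t, (N : ℝ) / ((N : ℝ) + 2 * j)
      ≤ (O.trace / N) ^ t * 1 := by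
        apply mul_le_mul_of_nonneg_left hprod1 (pow_nonneg htr0 t)
    _ = (∫ ψ, Q ψ ∂σ) ^ t := by rw [mul_one, hmean]
    _ ≤ ∫ ψ, (Q ψ) ^ t ∂σ := hjensen

end
end

section
/- Let N ≥ 1 and let σ_N be the uniform probability measure on the unit sphere S^{N−1} ⊂ ℝ^N. Let O be an N×N real symmetric positive semidefinite matrix with distinct eigenvalues λ_1,…,λ_G ≥ 0 of multiplicities m_1,…,m_G ≥ 1 (m_1 + ⋯ + m_G = N), let m_min = min_i m_i, and for t ≥ 1 let μ_t(O) = ∫_{S^{N−1}} (ψᵀ O ψ)^t dσ_N(ψ). Then μ_t(O) ≤ (Tr(O)/N)^t · ∏_{j=0}^{t−1} (1 + 2j/m_min). (This is an exact, nonasymptotic form of the upper bound of Corollary 4, which bounds μ_t(O)/(Tr(O)/N)^t by 1 plus correction terms controlled by t and the smallest eigenvalue multiplicity.) -/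
open MeasureTheory Matrix Finset

noncomputable section

namespace HMUB

variable {N : ℕ}

abbrev Sph (N : ℕ) := Metric.sphere (0 : EuclideanSpace ℝ (Fin N)) 1

instance : CompactSpace (Sph N) := Metric.sphere.compactSpace _ _

lemma cont_coord (k : Fin N) :
    Continuous (fun ψ : Sph N => (ψ : EuclideanSpace ℝ (Fin N)) k) := by
  have h1 : Continuous (fun ψ : Sph N => (ψ : EuclideanSpace ℝ (Fin N))) :=
    continuous_subtype_val
  exact (continuous_apply k).comp ((PiLp.continuous_ofLp 2 _).comp h1)

lemma integrable_cont (σ : Measure (Sph N)) [IsFiniteMeasure σ] {g : Sph N → ℝ}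
    (hg : Continuous g) : Integrable g σ := by
  obtain ⟨C, hC⟩ := (isCompact_univ (X := Sph N)).exists_bound_of_continuousOn hg.continuousOn
  exact (integrable_const C).mono' hg.aestronglyMeasurable
    (Filter.Eventually.of_forall fun x => hC x (Set.mem_univ x))

lemma sq_sum_coord (ψ : Sph N) :
    ∑ k, ((ψ : EuclideanSpace ℝ (Fin N)) k) ^ 2 = 1 := by
  have h : ‖(ψ : EuclideanSpace ℝ (Fin N))‖ = 1 := mem_sphere_zero_iff_norm.mp ψ.2
  rw [EuclideanSpace.norm_eq] at h
  have h2 := congrArg (fun x : ℝ => x ^ 2) h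
  simp only [Real.sq_sqrt (by positivity : (0:ℝ) ≤ ∑ k, ‖(ψ : EuclideanSpace ℝ (Fin N)) k‖ ^ 2)] at h2
  simpa [Real.norm_eq_abs, sq_abs] using h2

/-- invariance of integrals -/
lemma integral_comp_sphereMap (σ : Measure (Sph N)) (hσ : IsUniformSphereMeasure σ)
    (f : EuclideanSpace ℝ (Fin N) ≃ₗᵢ[ℝ] EuclideanSpace ℝ (Fin N))
    {g : Sph N → ℝ} (hg : Continuous g) :
    ∫ ψ, g (sphereMap f ψ) ∂σ = ∫ ψ, g ψ ∂σ := by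
  have hc : Continuous (sphereMap f) :=
    Continuous.subtype_mk (f.continuous.comp continuous_subtype_val) _
  calc ∫ ψ, g (sphereMap f ψ) ∂σ
      = ∫ y, g y ∂(Measure.map (sphereMap f) σ) :=
        (integral_map hc.aemeasurable hg.aestronglyMeasurable).symm
    _ = ∫ ψ, g ψ ∂σ := by rw [hσ.2 f]


def rotFun (i j : Fin N) (θ : ℝ) (x : EuclideanSpace ℝ (Fin N)) : EuclideanSpace ℝ (Fin N) :=
  WithLp.toLp 2 fun k => if k = i then Real.cos θ * x i - Real.sin θ * x j
    else if k = j then Real.sin θ * x i + Real.cos θ * x j else x k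

lemma rotFun_i (i j : Fin N) (θ : ℝ) (x : EuclideanSpace ℝ (Fin N)) :
    rotFun i j θ x i = Real.cos θ * x i - Real.sin θ * x j := by simp [rotFun]

lemma rotFun_j (i j : Fin N) (hij : i ≠ j) (θ : ℝ) (x : EuclideanSpace ℝ (Fin N)) :
    rotFun i j θ x j = Real.sin θ * x i + Real.cos θ * x j := by
  simp [rotFun, Ne.symm hij]

lemma rotFun_other (i j k : Fin N) (hki : k ≠ i) (hkj : k ≠ j) (θ : ℝ)
    (x : EuclideanSpace ℝ (Fin N)) : rotFun i j θ x k = x k := by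
  simp [rotFun, hki, hkj]

lemma sum_split (i j : Fin N) (hij : i ≠ j) (F : Fin N → ℝ) :
    ∑ k, F k = F i + F j + ∑ k ∈ (univ.erase i).erase j, F k := by
  rw [← Finset.add_sum_erase _ F (mem_univ i),
    ← Finset.add_sum_erase _ F (Finset.mem_erase.mpr ⟨Ne.symm hij, mem_univ j⟩), add_assoc]

def rotEquiv (i j : Fin N) (hij : i ≠ j) (θ : ℝ) :
    EuclideanSpace ℝ (Fin N) ≃ₗ[ℝ] EuclideanSpace ℝ (Fin N) where
  toFun := rotFun i j θ
  invFun := rotFun i j (-θ)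
  map_add' x y := PiLp.ext fun k => by
    simp only [rotFun, PiLp.add_apply, PiLp.toLp_apply]
    split_ifs <;> ring
  map_smul' c x := PiLp.ext fun k => by
    simp only [rotFun, PiLp.smul_apply, smul_eq_mul, RingHom.id_apply, PiLp.toLp_apply]
    split_ifs <;> ring
  left_inv x := PiLp.ext fun k => by
    show rotFun i j (-θ) (rotFun i j θ x) k = x k
    rcases eq_or_ne k i with rfl | hki
    · rw [rotFun_i, rotFun_i, rotFun_j _ _ hij, Real.cos_neg, Real.sin_neg]
      linear_combination (x k) * (Real.sin_sq_add_cos_sq θ)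
    rcases eq_or_ne k j with rfl | hkj
    · rw [rotFun_j _ _ hij, rotFun_i, rotFun_j _ _ hij, Real.cos_neg, Real.sin_neg]
      linear_combination (x k) * (Real.sin_sq_add_cos_sq θ)
    · rw [rotFun_other _ _ _ hki hkj, rotFun_other _ _ _ hki hkj]
  right_inv x := PiLp.ext fun k => by
    show rotFun i j θ (rotFun i j (-θ) x) k = x k
    rcases eq_or_ne k i with rfl | hki
    · rw [rotFun_i, rotFun_i, rotFun_j _ _ hij, Real.cos_neg, Real.sin_neg]
      linear_combination (x k) * (Real.sin_sq_add_cos_sq θ)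
    rcases eq_or_ne k j with rfl | hkj
    · rw [rotFun_j _ _ hij, rotFun_i, rotFun_j _ _ hij, Real.cos_neg, Real.sin_neg]
      linear_combination (x k) * (Real.sin_sq_add_cos_sq θ)
    · rw [rotFun_other _ _ _ hki hkj, rotFun_other _ _ _ hki hkj]

def rotIso (i j : Fin N) (hij : i ≠ j) (θ : ℝ) :
    EuclideanSpace ℝ (Fin N) ≃ₗᵢ[ℝ] EuclideanSpace ℝ (Fin N) :=
  LinearEquiv.isometryOfInner (rotEquiv i j hij θ) (by
    intro x y
    simp only [PiLp.inner_apply, RCLike.inner_apply, conj_trivial]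
    show ∑ k, (rotFun i j θ y k) * (rotFun i j θ x k) = _
    rw [sum_split i j hij (fun k => rotFun i j θ y k * rotFun i j θ x k),
      sum_split i j hij (fun k => y k * x k)]
    rw [Finset.sum_congr rfl (fun k hk => by
      obtain ⟨hkj, hki, -⟩ : k ≠ j ∧ k ≠ i ∧ True := by
        simpa [Finset.mem_erase] using hk
      rw [rotFun_other _ _ _ hki hkj, rotFun_other _ _ _ hki hkj])]
    rw [rotFun_i, rotFun_i, rotFun_j _ _ hij, rotFun_j _ _ hij]
    linear_combination (x i * y i + x j * y j) * (Real.sin_sq_add_cos_sq θ))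

lemma rotIso_apply (i j : Fin N) (hij : i ≠ j) (θ : ℝ) (x : EuclideanSpace ℝ (Fin N)) :
    rotIso i j hij θ x = rotFun i j θ x := rfl


def matIso (M : Matrix (Fin N) (Fin N) ℝ) (hM : Mᵀ * M = 1) :
    EuclideanSpace ℝ (Fin N) ≃ₗᵢ[ℝ] EuclideanSpace ℝ (Fin N) :=
  LinearEquiv.isometryOfInner
    { toFun := fun x => WithLp.toLp 2 (M.mulVec x)
      invFun := fun x => WithLp.toLp 2 (Mᵀ.mulVec x)
      map_add' := fun x y => PiLp.ext fun k => by simp [Matrix.mulVec_add]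
      map_smul' := fun c x => PiLp.ext fun k => by simp [Matrix.mulVec_smul]
      left_inv := fun x => by
        show WithLp.toLp 2 (Mᵀ.mulVec (M.mulVec x)) = x
        rw [Matrix.mulVec_mulVec, hM, Matrix.one_mulVec]
      right_inv := fun x => by
        show WithLp.toLp 2 (M.mulVec (Mᵀ.mulVec x)) = x
        rw [Matrix.mulVec_mulVec, mul_eq_one_comm.mp hM, Matrix.one_mulVec] }
    (by
      intro x y
      simp only [PiLp.inner_apply, RCLike.inner_apply, conj_trivial]
      show (M.mulVec y) ⬝ᵥ (M.mulVec x) = y ⬝ᵥ x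
      rw [Matrix.dotProduct_mulVec, ← Matrix.mulVec_transpose, Matrix.mulVec_mulVec, hM,
        Matrix.one_mulVec])

lemma matIso_apply (M : Matrix (Fin N) (Fin N) ℝ) (hM : Mᵀ * M = 1)
    (x : EuclideanSpace ℝ (Fin N)) : matIso M hM x = M.mulVec x := rfl

lemma quad_form_eq (Q : Matrix (Fin N) (Fin N) ℝ) (d : Fin N → ℝ) (x : Fin N → ℝ) :
    x ⬝ᵥ (Q * Matrix.diagonal d * Qᵀ).mulVec x = ∑ k, d k * (Qᵀ.mulVec x k) ^ 2 := by
  rw [← Matrix.mulVec_mulVec, ← Matrix.mulVec_mulVec, Matrix.dotProduct_mulVec,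
    ← Matrix.mulVec_transpose]
  simp only [dotProduct, Matrix.mulVec_diagonal]
  exact Finset.sum_congr rfl fun k _ => by ring

lemma trace_conj (Q : Matrix (Fin N) (Fin N) ℝ) (d : Fin N → ℝ) (hQ : Q * Qᵀ = 1) :
    (Q * Matrix.diagonal d * Qᵀ).trace = ∑ k, d k := by
  rw [Matrix.trace_mul_cycle, mul_eq_one_comm.mp hQ, Matrix.one_mul,
    Matrix.trace_diagonal]


def Sq (d : Fin N → ℝ) (ψ : Sph N) : ℝ := ∑ k, d k * ((ψ : EuclideanSpace ℝ (Fin N)) k) ^ 2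

lemma cont_Sq (d : Fin N → ℝ) : Continuous (Sq d) :=
  continuous_finset_sum _ fun k _ => continuous_const.mul ((cont_coord k).pow 2)

lemma cont_rot_joint (i j : Fin N) (hij : i ≠ j) :
    Continuous (fun p : ℝ × Sph N => sphereMap (rotIso i j hij p.1) p.2) := by
  apply Continuous.subtype_mk
  show Continuous fun p : ℝ × Sph N => rotFun i j p.1 (p.2 : EuclideanSpace ℝ (Fin N))
  have hg : Continuous fun p : ℝ × Sph N =>
      (fun k => rotFun i j p.1 (p.2 : EuclideanSpace ℝ (Fin N)) k : Fin N → ℝ) := by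
    apply continuous_pi
    intro k
    have hci : Continuous fun p : ℝ × Sph N => (p.2 : EuclideanSpace ℝ (Fin N)) i :=
      (cont_coord i).comp continuous_snd
    have hcj : Continuous fun p : ℝ × Sph N => (p.2 : EuclideanSpace ℝ (Fin N)) j :=
      (cont_coord j).comp continuous_snd
    have hck : Continuous fun p : ℝ × Sph N => (p.2 : EuclideanSpace ℝ (Fin N)) k :=
      (cont_coord k).comp continuous_snd
    rcases eq_or_ne k i with rfl | hki
    · simp only [rotFun_i]
      exact ((Real.continuous_cos.comp continuous_fst).mul hci).sub
        ((Real.continuous_sin.comp continuous_fst).mul hcj)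
    rcases eq_or_ne k j with rfl | hkj
    · simp only [rotFun_j i k hij]
      exact ((Real.continuous_sin.comp continuous_fst).mul hci).add
        ((Real.continuous_cos.comp continuous_fst).mul hcj)
    · simp only [rotFun_other i j k hki hkj]
      exact hck
  exact (PiLp.continuous_toLp 2 _).comp hg

lemma key_identity (σ : Measure (Sph N)) (hσ : IsUniformSphereMeasure σ)
    (d : Fin N → ℝ) (i j : Fin N) (hij : i ≠ j) (n : ℕ) :
    ∫ ψ : Sph N, (((ψ : EuclideanSpace ℝ (Fin N)) i) ^ 2
        - ((ψ : EuclideanSpace ℝ (Fin N)) j) ^ 2) * (Sq d ψ) ^ n ∂σ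
      = (2 * n * (d i - d j)) *
        ∫ ψ : Sph N, ((ψ : EuclideanSpace ℝ (Fin N)) i) ^ 2
          * ((ψ : EuclideanSpace ℝ (Fin N)) j) ^ 2 * (Sq d ψ) ^ (n - 1) ∂σ := by
  haveI : IsProbabilityMeasure σ := hσ.1
  set f₁ : Sph N → ℝ := fun φ =>
    ((φ : EuclideanSpace ℝ (Fin N)) i ^ 2 - (φ : EuclideanSpace ℝ (Fin N)) j ^ 2)
      * (Sq d φ) ^ n with hf₁
  set f₂ : Sph N → ℝ := fun φ =>
    (φ : EuclideanSpace ℝ (Fin N)) i ^ 2 * (φ : EuclideanSpace ℝ (Fin N)) j ^ 2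
      * (Sq d φ) ^ (n - 1) with hf₂
  have hcont1 : Continuous f₁ :=
    (((cont_coord i).pow 2).sub ((cont_coord j).pow 2)).mul ((cont_Sq d).pow n)
  have hcont2 : Continuous f₂ :=
    (((cont_coord i).pow 2).mul ((cont_coord j).pow 2)).mul ((cont_Sq d).pow (n - 1))
  set G : Sph N → ℝ := fun φ => f₁ φ + (2 * n * (d j - d i)) * f₂ φ with hG
  have hGcont : Continuous G := hcont1.add (continuous_const.mul hcont2)
  obtain ⟨C, hC⟩ :=
    (isCompact_univ (X := Sph N)).exists_bound_of_continuousOn hGcont.continuousOn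
  set g : ℝ → Sph N → ℝ := fun θ ψ => G (sphereMap (rotIso i j hij θ) ψ) with hg
  have hgcont : Continuous fun p : ℝ × Sph N => g p.1 p.2 :=
    hGcont.comp (cont_rot_joint i j hij)
  -- Step A1: the θ-integral of the derivative vanishes for each ψ
  have hA1 : ∀ ψ : Sph N, ∫ θ in Set.Ioc (0:ℝ) (2*Real.pi), g θ ψ = 0 := by
    intro ψ
    set x : EuclideanSpace ℝ (Fin N) := (ψ : EuclideanSpace ℝ (Fin N)) with hx
    set u : ℝ → ℝ := fun θ => Real.cos θ * x i - Real.sin θ * x j with hu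
    set v : ℝ → ℝ := fun θ => Real.sin θ * x i + Real.cos θ * x j with hv
    set A : ℝ := ∑ k ∈ (univ.erase i).erase j, d k * (x k)^2 with hA
    set T : ℝ → ℝ := fun θ => d i * (u θ)^2 + d j * (v θ)^2 + A with hT
    set h : ℝ → ℝ := fun θ => u θ * v θ * (T θ)^n with hh
    have hφi : ∀ θ, ((sphereMap (rotIso i j hij θ) ψ : Sph N)
        : EuclideanSpace ℝ (Fin N)) i = u θ := fun θ => rotFun_i i j θ x
    have hφj : ∀ θ, ((sphereMap (rotIso i j hij θ) ψ : Sph N)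
        : EuclideanSpace ℝ (Fin N)) j = v θ := fun θ => rotFun_j i j hij θ x
    have hSrot : ∀ θ, Sq d (sphereMap (rotIso i j hij θ) ψ) = T θ := by
      intro θ
      show ∑ k, d k * ((rotFun i j θ x) k)^2 = T θ
      rw [sum_split i j hij (fun k => d k * ((rotFun i j θ x) k)^2)]
      rw [rotFun_i, rotFun_j i j hij]
      have htail : ∑ k ∈ (univ.erase i).erase j, d k * ((rotFun i j θ x) k)^2
          = ∑ k ∈ (univ.erase i).erase j, d k * (x k)^2 := by
        refine Finset.sum_congr rfl fun k hk => ?_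
        have hkj : k ≠ j := (Finset.mem_erase.mp hk).1
        have hki : k ≠ i := (Finset.mem_erase.mp (Finset.mem_erase.mp hk).2).1
        rw [rotFun_other i j k hki hkj]
      rw [htail]
    have hderiv : ∀ θ, HasDerivAt h (g θ ψ) θ := by
      intro θ
      have hu' : HasDerivAt u (-(v θ)) θ := by
        have h0 := ((Real.hasDerivAt_cos θ).mul_const (x i)).fun_sub
          ((Real.hasDerivAt_sin θ).mul_const (x j))
        refine h0.congr_deriv ?_
        show _ = -(Real.sin θ * x i + Real.cos θ * x j); ring
      have hv' : HasDerivAt v (u θ) θ := by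
        have h0 := ((Real.hasDerivAt_sin θ).mul_const (x i)).fun_add
          ((Real.hasDerivAt_cos θ).mul_const (x j))
        refine h0.congr_deriv ?_
        show _ = Real.cos θ * x i - Real.sin θ * x j; ring
      have hT' : HasDerivAt T (d i * (2 * u θ * (-(v θ))) + d j * (2 * v θ * u θ)) θ := by
        have h1 : HasDerivAt (fun θ => u θ ^ 2) (2 * u θ * (-(v θ))) θ := by
          have := hu'.fun_pow 2
          simpa using this
        have h2 : HasDerivAt (fun θ => v θ ^ 2) (2 * v θ * u θ) θ := by
          have := hv'.fun_pow 2
          simpa using this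
        exact ((h1.const_mul (d i)).add (h2.const_mul (d j))).add_const A
      have hh' : HasDerivAt h ((-(v θ) * v θ + u θ * u θ) * (T θ)^n
          + (u θ * v θ) * ((n : ℝ) * (T θ)^(n-1)
            * (d i * (2 * u θ * (-(v θ))) + d j * (2 * v θ * u θ)))) θ :=
        (hu'.mul hv').mul (hT'.pow n)
      convert hh' using 1
      show G (sphereMap (rotIso i j hij θ) ψ) = _
      rw [hG]
      show f₁ _ + (2 * n * (d j - d i)) * f₂ _ = _
      rw [hf₁, hf₂]
      simp only [hφi θ, hφj θ, hSrot θ]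
      generalize (T θ)^n = P
      generalize (T θ)^(n-1) = R
      ring
    have hcθ : Continuous (fun θ : ℝ => g θ ψ) := by
      have : (fun θ : ℝ => g θ ψ)
          = (fun p : ℝ × Sph N => g p.1 p.2) ∘ (fun θ : ℝ => (θ, ψ)) := rfl
      rw [this]
      exact hgcont.comp (continuous_id.prodMk continuous_const)
    have hint : IntervalIntegrable (fun θ => g θ ψ) MeasureTheory.volume 0 (2*Real.pi) :=
      hcθ.intervalIntegrable 0 (2*Real.pi)
    have hFTC := intervalIntegral.integral_eq_sub_of_hasDerivAt
      (fun θ _ => hderiv θ) hint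
    rw [intervalIntegral.integral_of_le Real.two_pi_pos.le] at hFTC
    rw [hFTC]
    have hu2 : u (2*Real.pi) = u 0 := by
      simp [hu, Real.cos_two_pi, Real.sin_two_pi]
    have hv2 : v (2*Real.pi) = v 0 := by
      simp [hv, Real.cos_two_pi, Real.sin_two_pi]
    have hend : h (2*Real.pi) = h 0 := by
      simp only [hh, hT, hu2, hv2]
    rw [hend, sub_self]
  -- Step A2: Fubini
  have hG0 : ∫ φ, G φ ∂σ = 0 := by
    haveI : IsFiniteMeasure
        (MeasureTheory.volume.restrict (Set.Ioc (0:ℝ) (2*Real.pi))) := by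
      constructor
      rw [Measure.restrict_apply_univ, Real.volume_Ioc]
      exact ENNReal.ofReal_lt_top
    have hswap : ∫ ψ : Sph N,
          (∫ θ, g θ ψ ∂(MeasureTheory.volume.restrict (Set.Ioc (0:ℝ) (2*Real.pi)))) ∂σ
        = ∫ θ, (∫ ψ : Sph N, g θ ψ ∂σ)
            ∂(MeasureTheory.volume.restrict (Set.Ioc (0:ℝ) (2*Real.pi))) := by
      apply MeasureTheory.integral_integral_swap
      have hcont' : Continuous (Function.uncurry fun (ψ : Sph N) (θ:ℝ) => g θ ψ) := by
        have heq : (Function.uncurry fun (ψ : Sph N) (θ:ℝ) => g θ ψ)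
            = (fun p : ℝ × Sph N => g p.1 p.2) ∘ (fun q : Sph N × ℝ => (q.2, q.1)) := rfl
        rw [heq]
        exact hgcont.comp (continuous_snd.prodMk continuous_fst)
      refine (integrable_const C).mono' hcont'.aestronglyMeasurable ?_
      exact Filter.Eventually.of_forall fun p => hC _ (Set.mem_univ _)
    have hL : ∫ ψ : Sph N,
        (∫ θ, g θ ψ ∂(MeasureTheory.volume.restrict (Set.Ioc (0:ℝ) (2*Real.pi)))) ∂σ = 0 := by
      simp only [hA1, integral_zero]
    have hR : ∀ θ : ℝ, ∫ ψ : Sph N, g θ ψ ∂σ = ∫ φ, G φ ∂σ := fun θ =>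
      integral_comp_sphereMap σ hσ (rotIso i j hij θ) hGcont
    rw [hL] at hswap
    simp only [hR, MeasureTheory.integral_const] at hswap
    rw [measureReal_def, Measure.restrict_apply_univ, Real.volume_Ioc, smul_eq_mul] at hswap
    have h2π : ((ENNReal.ofReal (2*Real.pi - 0)).toReal) ≠ 0 := by
      rw [sub_zero, ENNReal.toReal_ofReal Real.two_pi_pos.le]
      exact Real.two_pi_pos.ne'
    rcases mul_eq_zero.mp hswap.symm with h' | h'
    · exact absurd h' h2π
    · exact h'
  have hi1 : Integrable f₁ σ := integrable_cont σ hcont1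
  have hi2 : Integrable f₂ σ := integrable_cont σ hcont2
  have hsplit : ∫ φ, G φ ∂σ
      = ∫ φ, f₁ φ ∂σ + (2 * n * (d j - d i)) * ∫ φ, f₂ φ ∂σ := by
    rw [hG]
    rw [integral_add hi1 (hi2.const_mul _), MeasureTheory.integral_const_mul]
  rw [hsplit] at hG0
  linear_combination hG0


lemma double_sum_1 {N : ℕ} (d a : Fin N → ℝ) (P : ℝ) :
    ∑ i, ∑ j, d i * ((a i - a j) * P)
      = ((N : ℝ) * (∑ i, d i * a i) - (∑ i, d i) * (∑ j, a j)) * P := by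
  have h1 : ∀ i : Fin N, ∑ j, d i * ((a i - a j) * P)
      = (N : ℝ) * (d i * a i) * P - d i * (∑ j, a j) * P := by
    intro i
    have : ∀ j ∈ univ, d i * ((a i - a j) * P) = d i * a i * P - a j * (d i * P) :=
      fun j _ => by ring
    rw [Finset.sum_congr rfl this, Finset.sum_sub_distrib, Finset.sum_const,
      Finset.card_univ, Fintype.card_fin, nsmul_eq_mul, ← Finset.sum_mul]
    ring
  rw [Finset.sum_congr rfl fun i _ => h1 i, Finset.sum_sub_distrib]
  rw [Finset.sum_congr rfl (fun x _ => show (N:ℝ) * (d x * a x) * P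
      = (d x * a x) * ((N:ℝ) * P) from by ring), ← Finset.sum_mul,
    Finset.sum_congr rfl (fun x (_ : x ∈ univ) => show (d x * ∑ j, a j) * P
      = d x * ((∑ j, a j) * P) from by ring), ← Finset.sum_mul]
  ring

lemma double_sum_2 {N : ℕ} (d a : Fin N → ℝ) (R : ℝ) :
    ∑ i, ∑ j, (d i * (d i - d j)) * (a i * a j * R)
      = ((∑ i, d i ^ 2 * a i) * (∑ j, a j) - (∑ i, d i * a i) * (∑ j, d j * a j)) * R := by
  have h1 : ∀ i : Fin N, ∑ j, (d i * (d i - d j)) * (a i * a j * R)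
      = (d i ^ 2 * a i) * (∑ j, a j) * R - (d i * a i) * (∑ j, d j * a j) * R := by
    intro i
    have : ∀ j ∈ univ, (d i * (d i - d j)) * (a i * a j * R)
        = a j * ((d i ^2 * a i) * R) - (d j * a j) * ((d i * a i) * R) :=
      fun j _ => by ring
    rw [Finset.sum_congr rfl this, Finset.sum_sub_distrib, ← Finset.sum_mul, ← Finset.sum_mul]
    ring
  rw [Finset.sum_congr rfl fun i _ => h1 i, Finset.sum_sub_distrib]
  rw [Finset.sum_congr rfl (fun x (_ : x ∈ univ) => show (d x ^ 2 * a x * ∑ j, a j) * R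
      = d x ^ 2 * a x * ((∑ j, a j) * R) from by ring), ← Finset.sum_mul,
    Finset.sum_congr rfl (fun x (_ : x ∈ univ) => show (d x * a x * ∑ j, d j * a j) * R
      = d x * a x * ((∑ j, d j * a j) * R) from by ring), ← Finset.sum_mul]
  ring

lemma key_identity' (σ : Measure (Sph N)) (hσ : IsUniformSphereMeasure σ)
    (d : Fin N → ℝ) (i j : Fin N) (n : ℕ) :
    ∫ ψ : Sph N, (((ψ : EuclideanSpace ℝ (Fin N)) i) ^ 2
        - ((ψ : EuclideanSpace ℝ (Fin N)) j) ^ 2) * (Sq d ψ) ^ n ∂σ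
      = (2 * n * (d i - d j)) *
        ∫ ψ : Sph N, ((ψ : EuclideanSpace ℝ (Fin N)) i) ^ 2
          * ((ψ : EuclideanSpace ℝ (Fin N)) j) ^ 2 * (Sq d ψ) ^ (n - 1) ∂σ := by
  rcases eq_or_ne i j with rfl | hij
  · simp
  · exact key_identity σ hσ d i j hij n

lemma moment_identity (σ : Measure (Sph N)) (hσ : IsUniformSphereMeasure σ)
    (d : Fin N → ℝ) (n : ℕ) :
    (N : ℝ) * ∫ ψ : Sph N, (Sq d ψ) ^ (n+1) ∂σ
      = (∑ k, d k) * ∫ ψ : Sph N, (Sq d ψ) ^ n ∂σ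
        + (2 * n) * ∫ ψ : Sph N,
            (Sq (fun k => d k ^ 2) ψ - (Sq d ψ) ^ 2) * (Sq d ψ) ^ (n - 1) ∂σ := by
  haveI : IsProbabilityMeasure σ := hσ.1
  have hSc : Continuous (Sq d) := cont_Sq d
  have hS2c : Continuous (Sq (fun k => d k ^ 2)) := cont_Sq _
  -- integrable families
  have intf : ∀ i j : Fin N, Integrable (fun ψ : Sph N =>
      d i * ((((ψ : EuclideanSpace ℝ (Fin N)) i) ^ 2
        - ((ψ : EuclideanSpace ℝ (Fin N)) j) ^ 2) * (Sq d ψ) ^ n)) σ := fun i j =>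
    integrable_cont σ (continuous_const.mul
      ((((cont_coord i).pow 2).sub ((cont_coord j).pow 2)).mul (hSc.pow n)))
  have inth : ∀ i j : Fin N, Integrable (fun ψ : Sph N =>
      (d i * (d i - d j)) * (((ψ : EuclideanSpace ℝ (Fin N)) i) ^ 2
        * ((ψ : EuclideanSpace ℝ (Fin N)) j) ^ 2 * (Sq d ψ) ^ (n-1))) σ := fun i j =>
    integrable_cont σ (continuous_const.mul
      ((((cont_coord i).pow 2).mul ((cont_coord j).pow 2)).mul (hSc.pow (n-1))))
  have E1 : ∑ i, ∑ j, (d i * ∫ ψ : Sph N, (((ψ : EuclideanSpace ℝ (Fin N)) i) ^ 2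
        - ((ψ : EuclideanSpace ℝ (Fin N)) j) ^ 2) * (Sq d ψ) ^ n ∂σ)
      = ∑ i, ∑ j, (d i * ((2 * n * (d i - d j)) *
          ∫ ψ : Sph N, ((ψ : EuclideanSpace ℝ (Fin N)) i) ^ 2
            * ((ψ : EuclideanSpace ℝ (Fin N)) j) ^ 2 * (Sq d ψ) ^ (n - 1) ∂σ)) :=
    Finset.sum_congr rfl fun i _ => Finset.sum_congr rfl fun j _ => by
      rw [key_identity' σ hσ d i j n]
  -- LHS of E1
  have hLHS : ∑ i, ∑ j, (d i * ∫ ψ : Sph N, (((ψ : EuclideanSpace ℝ (Fin N)) i) ^ 2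
        - ((ψ : EuclideanSpace ℝ (Fin N)) j) ^ 2) * (Sq d ψ) ^ n ∂σ)
      = (N : ℝ) * ∫ ψ : Sph N, (Sq d ψ) ^ (n+1) ∂σ
        - (∑ k, d k) * ∫ ψ : Sph N, (Sq d ψ) ^ n ∂σ := by
    have step1 : ∑ i, ∑ j, (d i * ∫ ψ : Sph N, (((ψ : EuclideanSpace ℝ (Fin N)) i) ^ 2
          - ((ψ : EuclideanSpace ℝ (Fin N)) j) ^ 2) * (Sq d ψ) ^ n ∂σ)
        = ∫ ψ : Sph N, ∑ i, ∑ j, d i * ((((ψ : EuclideanSpace ℝ (Fin N)) i) ^ 2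
          - ((ψ : EuclideanSpace ℝ (Fin N)) j) ^ 2) * (Sq d ψ) ^ n) ∂σ := by
      rw [MeasureTheory.integral_finset_sum univ (fun i _ =>
        integrable_finset_sum univ (fun j _ => intf i j))]
      refine Finset.sum_congr rfl fun i _ => ?_
      rw [MeasureTheory.integral_finset_sum univ (fun j _ => intf i j)]
      refine Finset.sum_congr rfl fun j _ => ?_
      rw [MeasureTheory.integral_const_mul]
    rw [step1]
    have step2 : (fun ψ : Sph N => ∑ i, ∑ j, d i * ((((ψ : EuclideanSpace ℝ (Fin N)) i) ^ 2
          - ((ψ : EuclideanSpace ℝ (Fin N)) j) ^ 2) * (Sq d ψ) ^ n))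
        = fun ψ : Sph N => (N : ℝ) * (Sq d ψ) ^ (n+1) - (∑ k, d k) * (Sq d ψ) ^ n := by
      funext ψ
      rw [double_sum_1 d (fun k => ((ψ : EuclideanSpace ℝ (Fin N)) k) ^ 2) ((Sq d ψ) ^ n)]
      rw [sq_sum_coord ψ]
      show ((N:ℝ) * Sq d ψ - (∑ k, d k) * 1) * (Sq d ψ) ^ n = _
      rw [pow_succ]
      ring
    rw [step2, MeasureTheory.integral_sub (f := fun ψ : Sph N => (N : ℝ) * (Sq d ψ) ^ (n+1))
      (g := fun ψ : Sph N => (∑ k, d k) * (Sq d ψ) ^ n)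
      (integrable_cont σ (continuous_const.mul (hSc.pow (n+1))))
      (integrable_cont σ (continuous_const.mul (hSc.pow n))),
      MeasureTheory.integral_const_mul, MeasureTheory.integral_const_mul]
  -- RHS of E1
  have hRHS : ∑ i, ∑ j, (d i * ((2 * n * (d i - d j)) *
        ∫ ψ : Sph N, ((ψ : EuclideanSpace ℝ (Fin N)) i) ^ 2
          * ((ψ : EuclideanSpace ℝ (Fin N)) j) ^ 2 * (Sq d ψ) ^ (n - 1) ∂σ))
      = (2 * n) * ∫ ψ : Sph N,
          (Sq (fun k => d k ^ 2) ψ - (Sq d ψ) ^ 2) * (Sq d ψ) ^ (n - 1) ∂σ := by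
    have key2 : ∀ i j : Fin N, d i * ((2 * n * (d i - d j)) *
          ∫ ψ : Sph N, ((ψ : EuclideanSpace ℝ (Fin N)) i) ^ 2
            * ((ψ : EuclideanSpace ℝ (Fin N)) j) ^ 2 * (Sq d ψ) ^ (n - 1) ∂σ)
        = (2 * n : ℝ) * ∫ ψ : Sph N, (d i * (d i - d j)) *
            (((ψ : EuclideanSpace ℝ (Fin N)) i) ^ 2
              * ((ψ : EuclideanSpace ℝ (Fin N)) j) ^ 2 * (Sq d ψ) ^ (n - 1)) ∂σ := by
      intro i j
      rw [MeasureTheory.integral_const_mul]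
      ring
    rw [Finset.sum_congr rfl fun i (_ : i ∈ univ) => Finset.sum_congr rfl
      fun j (_ : j ∈ univ) => key2 i j]
    have pull : ∑ i, ∑ j, ((2 * n : ℝ) * ∫ ψ : Sph N, (d i * (d i - d j)) *
            (((ψ : EuclideanSpace ℝ (Fin N)) i) ^ 2
              * ((ψ : EuclideanSpace ℝ (Fin N)) j) ^ 2 * (Sq d ψ) ^ (n - 1)) ∂σ)
        = (2 * n : ℝ) * ∑ i, ∑ j, ∫ ψ : Sph N, (d i * (d i - d j)) *
            (((ψ : EuclideanSpace ℝ (Fin N)) i) ^ 2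
              * ((ψ : EuclideanSpace ℝ (Fin N)) j) ^ 2 * (Sq d ψ) ^ (n - 1)) ∂σ := by
      rw [Finset.mul_sum]
      exact Finset.sum_congr rfl fun i _ => (Finset.mul_sum _ _ _).symm
    rw [pull]
    congr 1
    rw [Finset.sum_congr rfl (fun i (_ : i ∈ univ) =>
      (MeasureTheory.integral_finset_sum univ (fun j _ => inth i j)).symm),
      ← MeasureTheory.integral_finset_sum univ (fun i _ =>
        integrable_finset_sum univ (fun j _ => inth i j))]
    refine MeasureTheory.integral_congr_ae (Filter.Eventually.of_forall fun ψ => ?_)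
    show ∑ i, ∑ j, (d i * (d i - d j)) *
        (((ψ : EuclideanSpace ℝ (Fin N)) i) ^ 2
          * ((ψ : EuclideanSpace ℝ (Fin N)) j) ^ 2 * (Sq d ψ) ^ (n - 1))
      = (Sq (fun k => d k ^ 2) ψ - (Sq d ψ) ^ 2) * (Sq d ψ) ^ (n - 1)
    rw [double_sum_2 d (fun k => ((ψ : EuclideanSpace ℝ (Fin N)) k) ^ 2) ((Sq d ψ) ^ (n-1)),
      sq_sum_coord ψ]
    show ((∑ i, d i ^ 2 * ((ψ : EuclideanSpace ℝ (Fin N)) i) ^ 2) * 1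
        - Sq d ψ * Sq d ψ) * (Sq d ψ) ^ (n-1) = _
    have hS2 : (∑ i, d i ^ 2 * ((ψ : EuclideanSpace ℝ (Fin N)) i) ^ 2)
        = Sq (fun k => d k ^ 2) ψ := rfl
    rw [hS2]
    ring
  rw [hLHS, hRHS] at E1
  linarith

lemma Sq_nonneg (d : Fin N → ℝ) (hd0 : ∀ k, 0 ≤ d k) (ψ : Sph N) : 0 ≤ Sq d ψ :=
  Finset.sum_nonneg fun k _ => mul_nonneg (hd0 k) (sq_nonneg _)

lemma moment_rec (σ : Measure (Sph N)) (hσ : IsUniformSphereMeasure σ)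
    (d : Fin N → ℝ) (hd0 : ∀ k, 0 ≤ d k) (Λ : ℝ) (hΛd : ∀ k, d k ≤ Λ) (n : ℕ) :
    (N : ℝ) * ∫ ψ : Sph N, (Sq d ψ) ^ (n+1) ∂σ
      ≤ ((∑ k, d k) + 2 * n * Λ) * ∫ ψ : Sph N, (Sq d ψ) ^ n ∂σ := by
  haveI : IsProbabilityMeasure σ := hσ.1
  have hSc : Continuous (Sq d) := cont_Sq d
  rw [moment_identity σ hσ d n]
  have hmain : (2 * n : ℝ) * ∫ ψ : Sph N,
        (Sq (fun k => d k ^ 2) ψ - (Sq d ψ) ^ 2) * (Sq d ψ) ^ (n - 1) ∂σ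
      ≤ (2 * n * Λ) * ∫ ψ : Sph N, (Sq d ψ) ^ n ∂σ := by
    cases n with
    | zero => simp
    | succ p =>
      have hpt : ∀ ψ : Sph N, (Sq (fun k => d k ^ 2) ψ - (Sq d ψ) ^ 2)
            * (Sq d ψ) ^ (p + 1 - 1) ≤ Λ * (Sq d ψ) ^ (p+1) := by
        intro ψ
        have hS : 0 ≤ Sq d ψ := Sq_nonneg d hd0 ψ
        have hS2leq : Sq (fun k => d k ^ 2) ψ ≤ Λ * Sq d ψ := by
          show (∑ k, d k ^ 2 * ((ψ : EuclideanSpace ℝ (Fin N)) k) ^ 2) ≤ _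
          rw [show Λ * Sq d ψ
              = ∑ k, Λ * (d k * ((ψ : EuclideanSpace ℝ (Fin N)) k) ^ 2) from by
            rw [← Finset.mul_sum]; rfl]
          refine Finset.sum_le_sum fun k _ => ?_
          have h1 : d k ^ 2 ≤ Λ * d k := by nlinarith [hd0 k, hΛd k]
          calc d k ^ 2 * ((ψ : EuclideanSpace ℝ (Fin N)) k) ^ 2
              ≤ (Λ * d k) * ((ψ : EuclideanSpace ℝ (Fin N)) k) ^ 2 :=
                mul_le_mul_of_nonneg_right h1 (sq_nonneg _)
            _ = Λ * (d k * ((ψ : EuclideanSpace ℝ (Fin N)) k) ^ 2) := by ring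
        have hP : 0 ≤ (Sq d ψ) ^ p := pow_nonneg hS p
        have h2 : (Sq (fun k => d k ^ 2) ψ - (Sq d ψ) ^ 2) * (Sq d ψ) ^ p
            ≤ (Λ * Sq d ψ) * (Sq d ψ) ^ p :=
          mul_le_mul_of_nonneg_right (by nlinarith [sq_nonneg (Sq d ψ)]) hP
        calc (Sq (fun k => d k ^ 2) ψ - (Sq d ψ) ^ 2) * (Sq d ψ) ^ (p + 1 - 1)
            = (Sq (fun k => d k ^ 2) ψ - (Sq d ψ) ^ 2) * (Sq d ψ) ^ p := by norm_num
          _ ≤ (Λ * Sq d ψ) * (Sq d ψ) ^ p := h2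
          _ = Λ * (Sq d ψ) ^ (p+1) := by rw [pow_succ]; ring
      have hint1 : Integrable (fun ψ : Sph N =>
          (Sq (fun k => d k ^ 2) ψ - (Sq d ψ) ^ 2) * (Sq d ψ) ^ (p + 1 - 1)) σ :=
        integrable_cont σ (((cont_Sq _).sub (hSc.pow 2)).mul (hSc.pow (p + 1 - 1)))
      have hint2 : Integrable (fun ψ : Sph N => Λ * (Sq d ψ) ^ (p+1)) σ :=
        integrable_cont σ (continuous_const.mul (hSc.pow (p+1)))
      have h3 := MeasureTheory.integral_mono hint1 hint2 hpt
      rw [MeasureTheory.integral_const_mul] at h3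
      have h4 : (0:ℝ) ≤ 2 * (p+1 : ℕ) := by positivity
      calc (2 * (p+1 : ℕ) : ℝ) * ∫ ψ : Sph N,
            (Sq (fun k => d k ^ 2) ψ - (Sq d ψ) ^ 2) * (Sq d ψ) ^ (p + 1 - 1) ∂σ
          ≤ (2 * (p+1 : ℕ) : ℝ) * (Λ * ∫ ψ : Sph N, (Sq d ψ) ^ (p+1) ∂σ) :=
            mul_le_mul_of_nonneg_left h3 h4
        _ = (2 * (p+1 : ℕ) * Λ) * ∫ ψ : Sph N, (Sq d ψ) ^ (p+1) ∂σ := by ring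
  rw [add_mul]
  exact add_le_add (le_refl _) hmain

lemma moment_bound (σ : Measure (Sph N)) (hσ : IsUniformSphereMeasure σ) (hN : 1 ≤ N)
    (d : Fin N → ℝ) (hd0 : ∀ k, 0 ≤ d k) (μ : ℝ) (hμ : 0 < μ)
    (hΛd : ∀ k, d k ≤ (∑ k', d k') / μ) (t : ℕ) :
    ∫ ψ : Sph N, (Sq d ψ) ^ t ∂σ
      ≤ ((∑ k, d k) / N) ^ t * ∏ j ∈ Finset.range t, (1 + 2 * (j : ℝ) / μ) := by
  haveI : IsProbabilityMeasure σ := hσ.1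
  have hSc : Continuous (Sq d) := cont_Sq d
  have hsumd : (0:ℝ) ≤ ∑ k, d k := Finset.sum_nonneg fun k _ => hd0 k
  have hNpos : (0:ℝ) < N := by
    have : (1:ℝ) ≤ (N:ℝ) := by exact_mod_cast hN
    linarith
  induction t with
  | zero => simp
  | succ t ih =>
    have hrec := moment_rec σ hσ d hd0 ((∑ k', d k') / μ) hΛd t
    have h2 : ∫ ψ : Sph N, (Sq d ψ) ^ (t+1) ∂σ
        ≤ ((∑ k, d k) / N) * (1 + 2 * (t:ℝ) / μ) * ∫ ψ : Sph N, (Sq d ψ) ^ t ∂σ := by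
      have hfact : ((∑ k, d k) + 2 * (t:ℝ) * ((∑ k', d k') / μ)) / N
          = ((∑ k, d k) / N) * (1 + 2 * (t:ℝ) / μ) := by
        field_simp
      rw [← hfact, div_mul_eq_mul_div, le_div_iff₀ hNpos]
      linarith [hrec]
    have hcoef : (0:ℝ) ≤ ((∑ k, d k) / N) * (1 + 2 * (t:ℝ) / μ) := by
      have h5 : (0:ℝ) ≤ (∑ k, d k) / N := div_nonneg hsumd hNpos.le
      have h6 : (0:ℝ) ≤ 1 + 2 * (t:ℝ) / μ := by positivity
      exact mul_nonneg h5 h6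
    calc ∫ ψ : Sph N, (Sq d ψ) ^ (t+1) ∂σ
        ≤ ((∑ k, d k) / N) * (1 + 2 * (t:ℝ) / μ) * ∫ ψ : Sph N, (Sq d ψ) ^ t ∂σ := h2
      _ ≤ ((∑ k, d k) / N) * (1 + 2 * (t:ℝ) / μ)
          * (((∑ k, d k) / N) ^ t * ∏ j ∈ Finset.range t, (1 + 2 * (j : ℝ) / μ)) :=
          mul_le_mul_of_nonneg_left ih hcoef
      _ = ((∑ k, d k) / N) ^ (t+1) * ∏ j ∈ Finset.range (t+1), (1 + 2 * (j : ℝ) / μ) := by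
          rw [Finset.prod_range_succ, pow_succ]
          ring

lemma sum_d_eq (G : ℕ) (lam : Fin G → ℝ) (m : Fin G → ℕ)
    (hlam_inj : Function.Injective lam) (d : Fin N → ℝ)
    (hd : ∀ j, ∃ g, d j = lam g)
    (hmult : ∀ g, (Finset.univ.filter (fun j => d j = lam g)).card = m g) :
    ∑ k, d k = ∑ g, (m g : ℝ) * lam g := by
  classical
  have hfib := Finset.sum_fiberwise_of_maps_to
    (fun (k : Fin N) (_ : k ∈ Finset.univ) => Finset.mem_univ ((hd k).choose)) d
  rw [← hfib]
  refine Finset.sum_congr rfl fun g _ => ?_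
  have hfe : Finset.univ.filter (fun k : Fin N => (hd k).choose = g)
      = Finset.univ.filter (fun k : Fin N => d k = lam g) := by
    refine Finset.filter_congr fun k _ => ?_
    constructor
    · intro h; rw [(hd k).choose_spec, h]
    · intro h
      apply hlam_inj
      rw [← (hd k).choose_spec, h]
  rw [hfe]
  rw [Finset.sum_congr rfl (fun k hk => (Finset.mem_filter.mp hk).2)]
  rw [Finset.sum_const, hmult g, nsmul_eq_mul]

end HMUB


open HMUB in
/-- nonasymptotic upper bound on the `t`-th Haar moment of a positive semidefinite
observable with distinct eigenvalues `lam g` of multiplicities `m g`: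
`μ_t(O) ≤ (Tr(O)/N)^t · ∏_{j=0}^{t-1} (1 + 2j/m_min)` where `m_min = min_g m g`. -/
theorem haar_moment_upper_bound (N G : ℕ) (hN : 1 ≤ N) (hG : 0 < G)
    (σ : Measure (Metric.sphere (0 : EuclideanSpace ℝ (Fin N)) 1))
    (hσ : IsUniformSphereMeasure σ)
    (O : Matrix (Fin N) (Fin N) ℝ) (hpsd : O.PosSemidef)
    (lam : Fin G → ℝ) (m : Fin G → ℕ)
    (hlam_nonneg : ∀ g, 0 ≤ lam g) (hlam_inj : Function.Injective lam)
    (hm : ∀ g, 1 ≤ m g) (hmsum : ∑ g, m g = N)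
    (d : Fin N → ℝ) (Q : Matrix (Fin N) (Fin N) ℝ) (hQ : Q * Qᵀ = 1)
    (hO : O = Q * Matrix.diagonal d * Qᵀ)
    (hd : ∀ j, ∃ g, d j = lam g)
    (hmult : ∀ g, (Finset.univ.filter (fun j => d j = lam g)).card = m g)
    (t : ℕ) (ht : 1 ≤ t) :
    ∫ ψ, ((ψ : EuclideanSpace ℝ (Fin N)) ⬝ᵥ
        O.mulVec (ψ : EuclideanSpace ℝ (Fin N))) ^ t ∂σ ≤
      (O.trace / N) ^ t *
        ∏ j ∈ Finset.range t,
          (1 + 2 * (j : ℝ) /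
            ((Finset.univ.inf' ⟨(⟨0, hG⟩ : Fin G), Finset.mem_univ _⟩ m : ℕ) : ℝ)) := by
  classical
  haveI : IsProbabilityMeasure σ := hσ.1
  set Mn : ℕ := Finset.univ.inf' ⟨(⟨0, hG⟩ : Fin G), Finset.mem_univ _⟩ m with hMn
  have hMn1 : 1 ≤ Mn := Finset.le_inf' _ _ fun g _ => hm g
  have hMnle : ∀ g, Mn ≤ m g := fun g => Finset.inf'_le _ (Finset.mem_univ g)
  have hμpos : (0:ℝ) < (Mn : ℝ) := by exact_mod_cast hMn1
  have hd0 : ∀ k, 0 ≤ d k := fun k => by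
    obtain ⟨g, hg⟩ := hd k
    rw [hg]; exact hlam_nonneg g
  have hsum_d : ∑ k, d k = ∑ g, (m g : ℝ) * lam g :=
    sum_d_eq G lam m hlam_inj d hd hmult
  have hdle : ∀ k, d k ≤ (∑ k', d k') / (Mn : ℝ) := by
    intro k
    rw [le_div_iff₀ hμpos]
    obtain ⟨g₀, hg₀⟩ := hd k
    rw [hg₀, hsum_d]
    calc lam g₀ * (Mn : ℝ) ≤ lam g₀ * (m g₀ : ℝ) :=
          mul_le_mul_of_nonneg_left (by exact_mod_cast hMnle g₀) (hlam_nonneg g₀)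
      _ = (m g₀ : ℝ) * lam g₀ := mul_comm _ _
      _ ≤ ∑ g, (m g : ℝ) * lam g :=
          Finset.single_le_sum (f := fun g => (m g : ℝ) * lam g) (fun g _ =>
            mul_nonneg (Nat.cast_nonneg _) (hlam_nonneg g)) (Finset.mem_univ g₀)
  have htrace : O.trace = ∑ k, d k := by rw [hO]; exact trace_conj Q d hQ
  have hQQ : (Qᵀ)ᵀ * Qᵀ = 1 := by rw [Matrix.transpose_transpose]; exact hQ
  have hintegral : ∫ ψ, ((ψ : EuclideanSpace ℝ (Fin N)) ⬝ᵥ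
        O.mulVec (ψ : EuclideanSpace ℝ (Fin N))) ^ t ∂σ
      = ∫ ψ : Sph N, (Sq d ψ) ^ t ∂σ := by
    have hpt : ∀ ψ : Sph N, ((ψ : EuclideanSpace ℝ (Fin N)) ⬝ᵥ
        O.mulVec (ψ : EuclideanSpace ℝ (Fin N))) ^ t
        = (Sq d (sphereMap (matIso Qᵀ hQQ) ψ)) ^ t := by
      intro ψ
      congr 1
      rw [hO, quad_form_eq Q d]
      rfl
    rw [show (fun ψ : Sph N => ((ψ : EuclideanSpace ℝ (Fin N)) ⬝ᵥ
          O.mulVec (ψ : EuclideanSpace ℝ (Fin N))) ^ t)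
        = fun ψ : Sph N => (Sq d (sphereMap (matIso Qᵀ hQQ) ψ)) ^ t from funext hpt]
    exact integral_comp_sphereMap σ hσ (matIso Qᵀ hQQ) ((cont_Sq d).pow t)
  rw [hintegral, htrace]
  exact moment_bound σ hσ hN d hd0 (Mn : ℝ) hμpos hdle t

end
end

section
/- Let N ≥ 2 and let U_0, U_1, …, U_N be N+1 complex N×N unitary matrices forming a complete set of mutually unbiased bases, i.e. for all a ≠ b and all indices i, j, |((U_a)ᴴ U_b)_{ij}|² = 1/N. Then the real linear span of the rank-one projectors { U_b E_{ii} (U_b)ᴴ : b ∈ {0,…,N}, i ∈ {1,…,N} } (where E_{ii} is the matrix with a single 1 in position (i,i)) equals the full real vector space of N×N Hermitian matrices. Consequently, measurements of all these projectors are tomographically complete: two Hermitian matrices with the same inner product against every projector in the family are equal. -/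
open Matrix Finset

noncomputable section

set_option linter.unusedSectionVars false
set_option linter.dupNamespace false

open Kronecker

namespace MUBAux

variable {n : Type*} [Fintype n] [DecidableEq n]

/-- The swap (flip) operator on `n × n`. -/
def swap (n : Type*) [DecidableEq n] : Matrix (n × n) (n × n) ℂ :=
  Matrix.of fun p q => if q = Prod.swap p then 1 else 0

lemma swap_apply (p q : n × n) : swap n p q = if q = Prod.swap p then 1 else 0 := rfl

lemma swap_conjTranspose : (swap n)ᴴ = swap n := by
  ext p q
  simp only [Matrix.conjTranspose_apply, swap_apply]
  by_cases h : p = Prod.swap q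
  · have h' : q = Prod.swap p := by rw [h]; rfl
    rw [if_pos h, if_pos h', star_one]
  · have h' : ¬ q = Prod.swap p := fun hq => h (by rw [hq]; rfl)
    rw [if_neg h, if_neg h', star_zero]

lemma trace_swap : (swap n).trace = (Fintype.card n : ℂ) := by
  simp only [Matrix.trace, Matrix.diag, swap_apply]
  rw [Fintype.sum_prod_type]
  simp [Prod.ext_iff, eq_comm]

lemma swap_mul_swap : swap n * swap n = 1 := by
  ext p q
  simp only [Matrix.mul_apply, swap_apply, Matrix.one_apply, ite_mul, one_mul, zero_mul]
  rw [Finset.sum_ite_eq' univ (Prod.swap p) (fun r => if q = Prod.swap r then (1:ℂ) else 0)]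
  simp [eq_comm]

lemma trace_swap_mul (A B : Matrix n n ℂ) : (swap n * (A ⊗ₖ B)).trace = (A * B).trace := by
  simp only [Matrix.trace, Matrix.diag, Matrix.mul_apply, swap_apply, ite_mul, one_mul, zero_mul]
  rw [Fintype.sum_prod_type]
  simp only [Finset.sum_ite_eq' univ, Finset.mem_univ, if_true, Matrix.kroneckerMap_apply,
    Prod.fst_swap, Prod.snd_swap]
  rw [Finset.sum_comm]


lemma trace_mul_swap (A B : Matrix n n ℂ) : ((A ⊗ₖ B) * swap n).trace = (A * B).trace := by
  rw [Matrix.trace_mul_comm, trace_swap_mul]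

lemma kron_conjTranspose (A B : Matrix n n ℂ) : (A ⊗ₖ B)ᴴ = Aᴴ ⊗ₖ Bᴴ := by
  ext p q
  simp [Matrix.conjTranspose_apply, kronecker_apply, mul_comm]

lemma eq_zero_of_trace_conjTranspose_mul_self {m : Type*} [Fintype m]
    (Y : Matrix m m ℂ) (h : (Yᴴ * Y).trace = 0) : Y = 0 := by
  have h1 : (Yᴴ * Y).trace = ((∑ p : m, ∑ q : m, Complex.normSq (Y q p) : ℝ) : ℂ) := by
    simp only [Matrix.trace, Matrix.diag, Matrix.mul_apply, Matrix.conjTranspose_apply]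
    push_cast
    refine Finset.sum_congr rfl fun p _ => Finset.sum_congr rfl fun q _ => ?_
    rw [Complex.star_def, Complex.normSq_eq_conj_mul_self]
  rw [h1, Complex.ofReal_eq_zero] at h
  have h2 : ∀ p ∈ (univ : Finset m), ∀ q ∈ (univ : Finset m), Complex.normSq (Y q p) = 0 := by
    have := (Finset.sum_eq_zero_iff_of_nonneg fun p _ =>
      Finset.sum_nonneg fun q _ => Complex.normSq_nonneg _).1 h
    intro p hp q hq
    exact (Finset.sum_eq_zero_iff_of_nonneg fun q _ => Complex.normSq_nonneg _).1 (this p hp) q hq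
  ext q p
  simpa using Complex.normSq_eq_zero.1 (h2 p (mem_univ p) q (mem_univ q))


lemma design {ι : Type*} [Fintype ι] (P : ι → Matrix n n ℂ)
    (hherm : ∀ x, (P x)ᴴ = P x)
    (htr : ∀ x, (P x).trace = 1)
    (hself : ∀ x, (P x * P x).trace = 1)
    (hcard : (Fintype.card ι : ℂ) = (Fintype.card n) * ((Fintype.card n) + 1))
    (hbig : ∑ x, ∑ y, (P x * P y).trace * (P x * P y).trace
        = 2 * (Fintype.card n) * ((Fintype.card n) + 1)) :
    ∑ x, (P x ⊗ₖ P x) = (1 : Matrix (n × n) (n × n) ℂ) + swap n := by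
  set d : ℂ := (Fintype.card n : ℂ) with hd
  set T : Matrix (n × n) (n × n) ℂ := ∑ x, (P x ⊗ₖ P x) with hT
  set Y : Matrix (n × n) (n × n) ℂ := T - (1 + swap n) with hY
  have hYherm : Yᴴ = Y := by
    rw [hY, Matrix.conjTranspose_sub, Matrix.conjTranspose_add, Matrix.conjTranspose_one,
      swap_conjTranspose, hT, Matrix.conjTranspose_sum]
    congr 1
    exact Finset.sum_congr rfl fun x _ => by rw [kron_conjTranspose, hherm]
  have hcardsum : ∑ _x : ι, (1 : ℂ) = d * (d + 1) := by
    rw [Finset.sum_const, Finset.card_univ, nsmul_eq_mul, mul_one, hcard]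
  have hTT : (T * T).trace = 2 * d * (d + 1) := by
    rw [hT, Finset.sum_mul_sum, Matrix.trace_sum, ← hbig]
    refine Finset.sum_congr rfl fun x _ => ?_
    rw [Matrix.trace_sum]
    refine Finset.sum_congr rfl fun y _ => ?_
    rw [← Matrix.mul_kronecker_mul, Matrix.trace_kronecker]
  have hTtr : T.trace = d * (d + 1) := by
    rw [hT, Matrix.trace_sum, ← hcardsum]
    exact Finset.sum_congr rfl fun x _ => by rw [Matrix.trace_kronecker, htr, mul_one]
  have hTS : (T * swap n).trace = d * (d + 1) := by
    rw [hT, Finset.sum_mul, Matrix.trace_sum, ← hcardsum]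
    exact Finset.sum_congr rfl fun x _ => by rw [trace_mul_swap, hself]
  have hST : (swap n * T).trace = d * (d + 1) := by
    rw [Matrix.trace_mul_comm, hTS]
  have hSS : (swap n * swap n).trace = d * d := by
    rw [swap_mul_swap, Matrix.trace_one]
    push_cast [Fintype.card_prod]
    ring
  have h1tr : (1 : Matrix (n × n) (n × n) ℂ).trace = d * d := by
    rw [Matrix.trace_one]
    push_cast [Fintype.card_prod]
    ring
  have hStr : (swap n).trace = d := trace_swap
  have hzero : (Yᴴ * Y).trace = 0 := by
    rw [hYherm, hY]
    simp only [Matrix.sub_mul, Matrix.mul_sub, Matrix.add_mul, Matrix.mul_add,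
      Matrix.mul_one, Matrix.one_mul, Matrix.trace_sub, Matrix.trace_add]
    rw [hTT, hTS, hST, hSS, h1tr, hStr, hTtr]
    ring
  have := eq_zero_of_trace_conjTranspose_mul_self Y hzero
  rw [hY, sub_eq_zero] at this
  exact this


lemma reconstruction {ι : Type*} [Fintype ι] (P : ι → Matrix n n ℂ)
    (hdesign : ∑ x, (P x ⊗ₖ P x) = (1 : Matrix (n × n) (n × n) ℂ) + swap n)
    (A : Matrix n n ℂ) :
    ∑ x, (A * P x).trace • P x = A.trace • 1 + A := by
  ext k m
  have key : ∀ j l : n, ∑ x, P x l j * P x k m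
      = ((1 : Matrix (n × n) (n × n) ℂ) + swap n) (l, k) (j, m) := by
    intro j l
    have h := congrFun (congrFun hdesign (l, k)) (j, m)
    rw [← h, Matrix.sum_apply]
    rfl
  have lhs1 : (∑ x, (A * P x).trace • P x) k m
      = ∑ j, ∑ l, A j l * ∑ x, P x l j * P x k m := by
    rw [Matrix.sum_apply]
    simp only [Matrix.smul_apply, smul_eq_mul, Matrix.trace, Matrix.diag, Matrix.mul_apply]
    simp only [Finset.sum_mul, Finset.mul_sum]
    rw [Finset.sum_comm]
    refine Finset.sum_congr rfl fun j _ => ?_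
    rw [Finset.sum_comm]
    refine Finset.sum_congr rfl fun l _ => Finset.sum_congr rfl fun x _ => ?_
    ring
  rw [lhs1]
  simp only [key, Matrix.add_apply, Matrix.one_apply, swap_apply, Prod.mk.injEq,
    Prod.swap_prod_mk]
  simp only [Matrix.smul_apply, Matrix.one_apply, smul_eq_mul, mul_add, Finset.sum_add_distrib,
    mul_ite, mul_one, mul_zero, ite_and]
  by_cases hkm : k = m <;>
    simp [hkm, Finset.sum_ite_eq, Finset.sum_ite_eq', Matrix.trace, Matrix.diag, mul_comm]

end MUBAux

set_option maxHeartbeats 1000000 in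
/-- the rank-one basis projectors of a complete set of `N+1` mutually unbiased
bases span (over ℝ) the full real vector space of `N×N` Hermitian matrices; consequently the
family of these projectors is tomographically complete. -/
theorem mub_projectors_tomographically_complete (N : ℕ) (hN : 2 ≤ N)
    (U : Fin (N + 1) → Matrix (Fin N) (Fin N) ℂ)
    (hU : ∀ b, U b ∈ Matrix.unitaryGroup (Fin N) ℂ)
    (hMUB : ∀ a b, a ≠ b → ∀ i j : Fin N,
      ‖((U a)ᴴ * U b) i j‖ ^ 2 = 1 / N) :
    (Submodule.span ℝ {M : Matrix (Fin N) (Fin N) ℂ |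
          ∃ b : Fin (N + 1), ∃ i : Fin N,
            M = U b * Matrix.single i i (1 : ℂ) * (U b)ᴴ} :
        Set (Matrix (Fin N) (Fin N) ℂ)) = {M | M.IsHermitian} ∧
      ∀ ρ τ : Matrix (Fin N) (Fin N) ℂ, ρ.IsHermitian → τ.IsHermitian →
        (∀ b : Fin (N + 1), ∀ i : Fin N,
          (ρ * (U b * Matrix.single i i (1 : ℂ) * (U b)ᴴ)).trace =
            (τ * (U b * Matrix.single i i (1 : ℂ) * (U b)ᴴ)).trace) →
        ρ = τ := by
  classical
  have hNne : (N : ℂ) ≠ 0 := Nat.cast_ne_zero.2 (by omega)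
  set Q : Fin (N + 1) → Fin N → Matrix (Fin N) (Fin N) ℂ :=
    fun b i => U b * Matrix.single i i (1 : ℂ) * (U b)ᴴ with hQdef
  have hUU : ∀ b, (U b)ᴴ * U b = 1 := by
    intro b
    have := (Matrix.mem_unitaryGroup_iff').1 (hU b)
    rwa [Matrix.star_eq_conjTranspose] at this
  have hUUc : ∀ b, U b * (U b)ᴴ = 1 := by
    intro b
    have := (Matrix.mem_unitaryGroup_iff).1 (hU b)
    rwa [Matrix.star_eq_conjTranspose] at this
  have hEntry : ∀ b i k m, Q b i k m = U b k i * star (U b m i) := by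
    intro b i k m
    rw [hQdef]
    simp only [Matrix.mul_assoc]
    rw [Matrix.mul_apply]
    rw [Finset.sum_eq_single i]
    · rw [Matrix.single_mul_apply_same (c := (1:ℂ)) i i m ((U b)ᴴ), one_mul, Matrix.conjTranspose_apply]
    · intro s _ hs
      rw [Matrix.single_mul_apply_of_ne (c := (1:ℂ)) i i s m hs ((U b)ᴴ), mul_zero]
    · simp
  have hHerm : ∀ b i, (Q b i)ᴴ = Q b i := by
    intro b i
    ext k m
    rw [Matrix.conjTranspose_apply, hEntry, hEntry]
    rw [star_mul', star_star]
    ring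
  have htrQpair : ∀ b c i j, (Q b i * Q c j).trace
      = star ((((U b)ᴴ * U c)) i j) * (((U b)ᴴ * U c) i j) := by
    intro b c i j
    have h1 : (Q b i * Q c j).trace
        = (∑ k, U b k i * star (U c k j)) * (∑ m, star (U b m i) * U c m j) := by
      simp only [Matrix.trace, Matrix.diag, Matrix.mul_apply, hEntry]
      rw [Finset.sum_mul_sum]
      refine Finset.sum_congr rfl fun k _ => Finset.sum_congr rfl fun m _ => by ring
    have h2 : ((U b)ᴴ * U c) i j = ∑ m, star (U b m i) * U c m j := by
      rw [Matrix.mul_apply]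
      exact Finset.sum_congr rfl fun m _ => by rw [Matrix.conjTranspose_apply]
    have h3 : star (((U b)ᴴ * U c) i j) = ∑ k, U b k i * star (U c k j) := by
      rw [h2, star_sum]
      exact Finset.sum_congr rfl fun k _ => by rw [star_mul', star_star]
    rw [h1, ← h2, ← h3]
  have hκ : ∀ b c i j, (Q b i * Q c j).trace
      = if b = c then (if i = j then (1 : ℂ) else 0) else (1 / N : ℂ) := by
    intro b c i j
    rw [htrQpair]
    by_cases hbc : b = c
    · subst hbc
      rw [hUU, if_pos rfl, Matrix.one_apply]
      by_cases hij : i = j <;> simp [hij]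
    · rw [if_neg hbc]
      have habs := hMUB b c hbc i j
      set z : ℂ := ((U b)ᴴ * U c) i j with hz
      have : star z * z = ((‖z‖ ^ 2 : ℝ) : ℂ) := by
        rw [Complex.sq_norm, Complex.star_def, mul_comm, Complex.mul_conj]
      rw [this, habs]
      push_cast
      ring
  have htr1 : ∀ b i, (Q b i).trace = 1 := by
    intro b i
    have h : (Q b i).trace = ((U b)ᴴ * U b) i i := by
      simp only [Matrix.trace, Matrix.diag, hEntry, Matrix.mul_apply,
        Matrix.conjTranspose_apply]
      exact Finset.sum_congr rfl fun k _ => by ring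
    rw [h, hUU, Matrix.one_apply_eq]
  have hone : ∀ b, ∑ i, Q b i = 1 := by
    intro b
    have hE : ∑ i : Fin N, Matrix.single i i (1 : ℂ) = 1 := by
      ext k m
      rw [Matrix.sum_apply]
      simp only [Matrix.single, Matrix.of_apply, Matrix.one_apply]
      by_cases hkm : k = m
      · subst hkm
        rw [Finset.sum_eq_single k] <;> simp +contextual
      · rw [if_neg hkm, Finset.sum_eq_zero]
        intro i _
        rw [if_neg]
        rintro ⟨rfl, rfl⟩
        exact hkm rfl
    calc (∑ i, Q b i) = U b * (∑ i, Matrix.single i i (1 : ℂ)) * (U b)ᴴ := by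
          rw [hQdef, Finset.mul_sum, Finset.sum_mul]
      _ = 1 := by rw [hE, mul_one, hUUc]
  set R : (Fin (N + 1) × Fin N) → Matrix (Fin N) (Fin N) ℂ := fun x => Q x.1 x.2 with hR
  have hdes : ∑ x, (R x ⊗ₖ R x) = (1 : Matrix (Fin N × Fin N) (Fin N × Fin N) ℂ)
      + MUBAux.swap (Fin N) := by
    apply MUBAux.design R (fun x => hHerm x.1 x.2) (fun x => htr1 x.1 x.2)
    · intro x
      rw [hκ, if_pos rfl, if_pos rfl]
    · simp only [Fintype.card_prod, Fintype.card_fin]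
      push_cast
      ring
    · simp only [Fintype.card_fin]
      have ht : ∀ x y : Fin (N + 1) × Fin N, (R x * R y).trace * (R x * R y).trace
          = if x.1 = y.1 then (if x.2 = y.2 then (1 : ℂ) else 0) else (1 / (N : ℂ) ^ 2) := by
        intro x y
        rw [hR]
        dsimp only
        rw [hκ]
        split
        · split <;> norm_num
        · ring
      simp only [ht]
      rw [Fintype.sum_prod_type]
      simp only [Fintype.sum_prod_type]
      have hinner : ∀ (b c : Fin (N + 1)) (i : Fin N),
          (∑ j : Fin N, if b = c then (if i = j then (1 : ℂ) else 0) else 1 / (N : ℂ) ^ 2)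
          = if b = c then (1 : ℂ) else 1 / N := by
        intro b c i
        by_cases hbc : b = c
        · simp [hbc, Finset.sum_ite_eq]
        · simp only [if_neg hbc]
          rw [Finset.sum_const, Finset.card_univ, Fintype.card_fin, nsmul_eq_mul]
          field_simp
      have hmid : ∀ b : Fin (N + 1), (∑ c, if b = c then (1 : ℂ) else 1 / N) = 2 := by
        intro b
        have hsplit : ∀ c : Fin (N + 1), (if b = c then (1 : ℂ) else 1 / N)
            = 1 / (N : ℂ) + (if b = c then (1 : ℂ) - 1 / (N : ℂ) else 0) := fun c => by
          split <;> ring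
        simp only [hsplit]
        rw [Finset.sum_add_distrib, Finset.sum_ite_eq, Finset.sum_const, Finset.card_univ,
          Fintype.card_fin, if_pos (Finset.mem_univ b), nsmul_eq_mul]
        push_cast
        field_simp
        ring
      calc (∑ b : Fin (N + 1), ∑ i : Fin N, ∑ c : Fin (N + 1), ∑ j : Fin N,
              if b = c then (if i = j then (1 : ℂ) else 0) else 1 / (N : ℂ) ^ 2)
          = ∑ _b : Fin (N + 1), ∑ _i : Fin N, (2 : ℂ) := by
            refine Finset.sum_congr rfl fun b _ => Finset.sum_congr rfl fun i _ => ?_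
            rw [Finset.sum_congr rfl fun c _ => hinner b c i, hmid b]
        _ = 2 * N * (N + 1) := by
            rw [Finset.sum_const, Finset.sum_const, Finset.card_univ, Finset.card_univ,
              Fintype.card_fin, Fintype.card_fin, nsmul_eq_mul, nsmul_eq_mul]
            push_cast
            ring
  have hrec := fun A => MUBAux.reconstruction R hdes A
  have hNp1 : ((N : ℂ) + 1) ≠ 0 := by
    have : ((N + 1 : ℕ) : ℂ) ≠ 0 := Nat.cast_ne_zero.2 (by omega)
    push_cast at this
    exact this
  constructor
  · apply Set.Subset.antisymm
    · intro M hM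
      have hle : Submodule.span ℝ {M : Matrix (Fin N) (Fin N) ℂ |
            ∃ b : Fin (N + 1), ∃ i : Fin N,
              M = U b * Matrix.single i i (1 : ℂ) * (U b)ᴴ}
          ≤ { carrier := {M : Matrix (Fin N) (Fin N) ℂ | M.IsHermitian}
              add_mem' := fun h1 h2 => h1.add h2
              zero_mem' := Matrix.isHermitian_zero
              smul_mem' := by
                intro r A hA
                show (r • A)ᴴ = r • A
                rw [Matrix.conjTranspose_smul, star_trivial]
                exact congrArg _ hA } := by
        rw [Submodule.span_le]
        rintro M ⟨b, i, rfl⟩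
        exact hHerm b i
      exact hle hM
    · intro M hM
      have hMH : Mᴴ = M := hM
      have hreal : ∀ x : Fin (N + 1) × Fin N,
          (((M * R x).trace.re : ℝ) : ℂ) = (M * R x).trace := by
        intro x
        rw [← Complex.conj_eq_iff_re]
        have h1 : (starRingEnd ℂ) ((M * R x).trace) = ((M * R x)ᴴ).trace := by
          rw [Matrix.trace_conjTranspose]; rfl
        rw [h1, Matrix.conjTranspose_mul, hHerm x.1 x.2, hMH, Matrix.trace_mul_comm]
      have htreal : ((M.trace.re : ℝ) : ℂ) = M.trace := by
        rw [← Complex.conj_eq_iff_re]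
        have h1 : (starRingEnd ℂ) (M.trace) = (Mᴴ).trace := by
          rw [Matrix.trace_conjTranspose]; rfl
        rw [h1, hMH]
      have conv : ∀ (r : ℝ) (B : Matrix (Fin N) (Fin N) ℂ), r • B = (r : ℂ) • B := by
        intro r B
        ext k m
        simp [Matrix.smul_apply, Complex.real_smul]
      have hMeq : M = (∑ x : Fin (N + 1) × Fin N, ((M * R x).trace.re : ℝ) • R x)
          + (-(M.trace.re) : ℝ) • (1 : Matrix (Fin N) (Fin N) ℂ) := by
        have h0 := hrec M
        have e1 : (∑ x : Fin (N + 1) × Fin N, ((M * R x).trace.re : ℝ) • R x)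
            = M.trace • 1 + M := by
          rw [← h0]
          refine Finset.sum_congr rfl fun x _ => ?_
          rw [conv, hreal]
        rw [e1, conv, Complex.ofReal_neg, htreal, neg_smul]
        abel
      rw [hMeq]
      have h1mem : (1 : Matrix (Fin N) (Fin N) ℂ) ∈ Submodule.span ℝ
          {M : Matrix (Fin N) (Fin N) ℂ | ∃ b : Fin (N + 1), ∃ i : Fin N,
            M = U b * Matrix.single i i (1 : ℂ) * (U b)ᴴ} := by
        rw [← hone 0]
        exact Submodule.sum_mem _ fun i _ => Submodule.subset_span ⟨0, i, rfl⟩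
      exact Submodule.add_mem _
        (Submodule.sum_mem _ fun x _ => Submodule.smul_mem _ _
          (Submodule.subset_span ⟨x.1, x.2, rfl⟩))
        (Submodule.smul_mem _ _ h1mem)
  · intro ρ τ hρ hτ hmeas
    have hA : ∀ x : Fin (N + 1) × Fin N, ((ρ - τ) * R x).trace = 0 := by
      intro x
      rw [Matrix.sub_mul, Matrix.trace_sub]
      exact sub_eq_zero.2 (hmeas x.1 x.2)
    have h0 := hrec (ρ - τ)
    simp only [hA, zero_smul, Finset.sum_const_zero] at h0
    have ht0 : (ρ - τ).trace = 0 := by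
      have h1 := congrArg Matrix.trace h0
      rw [Matrix.trace_zero, Matrix.trace_add, Matrix.trace_smul, Matrix.trace_one,
        smul_eq_mul] at h1
      simp only [Fintype.card_fin] at h1
      have h2 : (ρ - τ).trace * ((N : ℂ) + 1) = 0 := by
        linear_combination -h1
      exact (mul_eq_zero.1 h2).resolve_right hNp1
    rw [ht0, zero_smul, zero_add] at h0
    exact sub_eq_zero.1 h0.symm

end
end
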